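/- Let P̄₁, …, P̄_m be n×n real symmetric positive definite matrices with P̄ⱼ ⪯ γ̄·I for all j and some γ̄ > 0 (the individual covariances from the local filters, Assumption 2), and for each j let Mⱼ be an n×n real positive semidefinite matrix (the neighbors' information contribution Σ_k H_kᵀ R_k⁻¹ H_k in the incremental update). Define the local covariances P̌ⱼ = ((P̄ⱼ)⁻¹ + Mⱼ)⁻¹, let ω₁, …, ω_m be weights with 0 ≤ ωⱼ ≤ 1/(m − 1) and Σⱼ ωⱼ = 1, and set P_Γ = Σⱼ ωⱼ P̌ⱼ. Then the diffusion-update fused covariance P̂ = (Σⱼ (P̌ⱼ)⁻¹ − (m − 1)·(P_Γ)⁻¹)⁻¹ is well defined, symmetric positive definite, and uniformly bounded: P̂ ⪯ γ̄·I. (Theorem 1: boundedness of the estimated covariance produced by the incremental update followed by the ICI diffusion update.) -/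

import Mathlib

open Matrix Finset

section Helpers

variable {n : ℕ}

private lemma dot_sum' {m : ℕ} (x : Fin n → ℝ) (v : Fin m → Fin n → ℝ) :
    x ⬝ᵥ (∑ j, v j) = ∑ j, x ⬝ᵥ v j := by
  simp [dotProduct, Finset.mul_sum]
  exact Finset.sum_comm

private lemma sum_mulVec' {m : ℕ} (M : Fin m → Matrix (Fin n) (Fin n) ℝ) (x : Fin n → ℝ) :
    (∑ j, M j) *ᵥ x = ∑ j, (M j) *ᵥ x := by
  ext i
  simp only [Matrix.mulVec, dotProduct, Matrix.sum_apply, Finset.sum_apply, Finset.sum_mul]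
  exact Finset.sum_comm

private lemma isHerm_sum' {m : ℕ} {A : Fin m → Matrix (Fin n) (Fin n) ℝ}
    (h : ∀ j, (A j).IsHermitian) : (∑ j, A j).IsHermitian := by
  unfold Matrix.IsHermitian at *
  rw [Matrix.conjTranspose_sum]
  exact Finset.sum_congr rfl fun j _ => h j

private lemma isHerm_smul' {A : Matrix (Fin n) (Fin n) ℝ} (h : A.IsHermitian) (c : ℝ) :
    (c • A).IsHermitian := by
  unfold Matrix.IsHermitian at *
  rw [Matrix.conjTranspose_smul, h, star_trivial]

private lemma dot_symm {C : Matrix (Fin n) (Fin n) ℝ} (hC : C.IsHermitian) (a b : Fin n → ℝ) :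
    a ⬝ᵥ C *ᵥ b = b ⬝ᵥ C *ᵥ a := by
  rw [Matrix.dotProduct_mulVec, ← Matrix.mulVec_transpose]
  have ht : Cᵀ = C := by
    have := hC
    rwa [Matrix.IsHermitian, Matrix.conjTranspose_eq_transpose_of_trivial] at this
  rw [ht, dotProduct_comm]

private lemma mulVec_inv_cancel' {C : Matrix (Fin n) (Fin n) ℝ} (hC : C.PosDef) (x : Fin n → ℝ) :
    C *ᵥ (C⁻¹ *ᵥ x) = x := by
  rw [Matrix.mulVec_mulVec, Matrix.mul_nonsing_inv _ hC.det_pos.ne'.isUnit, Matrix.one_mulVec]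

/-- The key variational inequality: for posdef `C`, `2⟨x,y⟩ - ⟨y,Cy⟩ ≤ ⟨x,C⁻¹x⟩`. -/
private lemma key_var {C : Matrix (Fin n) (Fin n) ℝ} (hC : C.PosDef) (x y : Fin n → ℝ) :
    2 * (x ⬝ᵥ y) - y ⬝ᵥ C *ᵥ y ≤ x ⬝ᵥ C⁻¹ *ᵥ x := by
  set w : Fin n → ℝ := C⁻¹ *ᵥ x with hw
  have hCw : C *ᵥ w = x := mulVec_inv_cancel' hC x
  have h0 : 0 ≤ (y - w) ⬝ᵥ C *ᵥ (y - w) := by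
    have := hC.posSemidef.dotProduct_mulVec_nonneg (y - w)
    simpa using this
  have hexp : (y - w) ⬝ᵥ C *ᵥ (y - w)
      = y ⬝ᵥ C *ᵥ y - 2 * (x ⬝ᵥ y) + x ⬝ᵥ C⁻¹ *ᵥ x := by
    rw [Matrix.mulVec_sub, dotProduct_sub, sub_dotProduct, sub_dotProduct, hCw]
    have h1 : w ⬝ᵥ C *ᵥ y = y ⬝ᵥ x := by rw [dot_symm hC.isHermitian, hCw]
    have h2 : w ⬝ᵥ x = x ⬝ᵥ C⁻¹ *ᵥ x := by rw [hw, dotProduct_comm]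
    rw [h1, h2, dotProduct_comm y x]
    ring
  linarith [hexp ▸ h0]

/-- Evaluating the inverse quadratic form at the optimizer `y = C⁻¹x`. -/
private lemma inv_quad_eq {C : Matrix (Fin n) (Fin n) ℝ} (hC : C.PosDef) (x : Fin n → ℝ) :
    x ⬝ᵥ C⁻¹ *ᵥ x = 2 * (x ⬝ᵥ (C⁻¹ *ᵥ x)) - (C⁻¹ *ᵥ x) ⬝ᵥ C *ᵥ (C⁻¹ *ᵥ x) := by
  rw [mulVec_inv_cancel' hC x, dotProduct_comm (C⁻¹ *ᵥ x) x]
  ring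

/-- Lower bound on the inverse quadratic form from an upper bound on the matrix. -/
private lemma inv_lower {C : Matrix (Fin n) (Fin n) ℝ} (hC : C.PosDef) {γ : ℝ} (hγ : 0 < γ)
    (hub : ∀ x : Fin n → ℝ, x ⬝ᵥ C *ᵥ x ≤ γ * (x ⬝ᵥ x)) (x : Fin n → ℝ) :
    (1/γ) * (x ⬝ᵥ x) ≤ x ⬝ᵥ C⁻¹ *ᵥ x := by
  have h := key_var hC x ((1/γ) • x)
  rw [Matrix.mulVec_smul] at h
  simp only [dotProduct_smul, smul_dotProduct, smul_eq_mul] at h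
  have hub' := hub x
  have h1γ : (0:ℝ) < 1/γ := by positivity
  have e1 : (1/γ) * (x ⬝ᵥ C *ᵥ x) ≤ x ⬝ᵥ x := by
    have := mul_le_mul_of_nonneg_left hub' h1γ.le
    have e2 : (1/γ) * (γ * (x ⬝ᵥ x)) = x ⬝ᵥ x := by field_simp
    linarith [e2 ▸ this]
  have e3 : (1/γ) * ((1/γ) * (x ⬝ᵥ C *ᵥ x)) ≤ (1/γ) * (x ⬝ᵥ x) :=
    mul_le_mul_of_nonneg_left e1 h1γ.le
  linarith

end Helpers

/-- Loewner order on real matrices: `M ⪯ N` iff `N - M` is positive semidefinite. -/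
def Matrix.Loewner {n : ℕ} (M N : Matrix (Fin n) (Fin n) ℝ) : Prop :=
  (N - M).PosSemidef

/-- **Theorem 1.** Boundedness of the covariance produced by the incremental update
followed by the ICI diffusion update: with individual covariances `P̄ⱼ ⪯ γ̄·I`
(Assumption 2), positive semidefinite neighbor information contributions `Mⱼ`,
local covariances `P̌ⱼ = ((P̄ⱼ)⁻¹ + Mⱼ)⁻¹`, weights `0 ≤ ωⱼ ≤ 1/(m−1)` summing to one,
and `P_Γ = Σⱼ ωⱼ P̌ⱼ`, the fused covariance
`P̂ = (Σⱼ (P̌ⱼ)⁻¹ − (m−1)(P_Γ)⁻¹)⁻¹` is well defined, symmetric positive definite,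
and uniformly bounded by `γ̄·I`. -/
theorem diukf_ici_covariance_bounded
    {n m : ℕ} (hm : 2 ≤ m)
    (Pbar : Fin m → Matrix (Fin n) (Fin n) ℝ) (hPbar : ∀ j, (Pbar j).PosDef)
    (γbar : ℝ) (hγ : 0 < γbar)
    (hPup : ∀ j, Matrix.Loewner (Pbar j) (γbar • (1 : Matrix (Fin n) (Fin n) ℝ)))
    (M : Fin m → Matrix (Fin n) (Fin n) ℝ) (hM : ∀ j, (M j).PosSemidef)
    (Pcheck : Fin m → Matrix (Fin n) (Fin n) ℝ)
    (hPcheck : ∀ j, Pcheck j = ((Pbar j)⁻¹ + M j)⁻¹)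
    (ω : Fin m → ℝ) (hω0 : ∀ j, 0 ≤ ω j) (hω1 : ∀ j, ω j ≤ 1 / ((m : ℝ) - 1))
    (hωsum : ∑ j, ω j = 1)
    (PΓ : Matrix (Fin n) (Fin n) ℝ) (hPΓ : PΓ = ∑ j, ω j • Pcheck j) :
    (∑ j, (Pcheck j)⁻¹ - ((m : ℝ) - 1) • PΓ⁻¹).PosDef ∧
    ((∑ j, (Pcheck j)⁻¹ - ((m : ℝ) - 1) • PΓ⁻¹)⁻¹).PosDef ∧
    Matrix.Loewner (∑ j, (Pcheck j)⁻¹ - ((m : ℝ) - 1) • PΓ⁻¹)⁻¹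
      (γbar • (1 : Matrix (Fin n) (Fin n) ℝ)) := by
  have hm1 : (0:ℝ) < (m:ℝ) - 1 := by
    have : (2:ℝ) ≤ (m:ℝ) := by exact_mod_cast hm
    linarith
  -- Pcheck j is posdef, and its inverse equals Pbar j⁻¹ + M j
  have hInfo : ∀ j, ((Pbar j)⁻¹ + M j).PosDef := fun j =>
    (hPbar j).inv.add_posSemidef (hM j)
  have hPcheckPD : ∀ j, (Pcheck j).PosDef := fun j => (hPcheck j) ▸ (hInfo j).inv
  have hPcheckInv : ∀ j, (Pcheck j)⁻¹ = (Pbar j)⁻¹ + M j := fun j => by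
    rw [hPcheck j, Matrix.nonsing_inv_nonsing_inv _ (hInfo j).det_pos.ne'.isUnit]
  -- upper bound on the Pbar quadratic forms
  have hPbarUB : ∀ j, ∀ x : Fin n → ℝ, x ⬝ᵥ (Pbar j) *ᵥ x ≤ γbar * (x ⬝ᵥ x) := by
    intro j x
    have h := (hPup j).dotProduct_mulVec_nonneg x
    simp only [star_trivial, Matrix.sub_mulVec, dotProduct_sub,
      Matrix.smul_mulVec, Matrix.one_mulVec, dotProduct_smul, smul_eq_mul] at h
    linarith
  -- lower bound on the Pcheck⁻¹ quadratic forms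
  have hLB : ∀ j, ∀ x : Fin n → ℝ, (1/γbar) * (x ⬝ᵥ x) ≤ x ⬝ᵥ (Pcheck j)⁻¹ *ᵥ x := by
    intro j x
    have h1 : (1/γbar) * (x ⬝ᵥ x) ≤ x ⬝ᵥ (Pbar j)⁻¹ *ᵥ x :=
      inv_lower (hPbar j) hγ (hPbarUB j) x
    have h2 : 0 ≤ x ⬝ᵥ (M j) *ᵥ x := by simpa using (hM j).dotProduct_mulVec_nonneg x
    rw [hPcheckInv j, Matrix.add_mulVec, dotProduct_add]
    linarith
  -- PΓ is positive definite
  have hPΓPD : PΓ.PosDef := by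
    rw [hPΓ]
    refine Matrix.PosDef.of_dotProduct_mulVec_pos (isHerm_sum' fun j => isHerm_smul' (hPcheckPD j).isHermitian _) fun x hx => ?_
    rw [star_trivial, sum_mulVec', dot_sum']
    obtain ⟨j0, hj0⟩ : ∃ j, 0 < ω j := by
      by_contra hcon
      push_neg at hcon
      have : ∑ j, ω j = 0 := le_antisymm (Finset.sum_nonpos fun j _ => hcon j)
        (Finset.sum_nonneg fun j _ => hω0 j)
      rw [hωsum] at this; norm_num at this
    apply Finset.sum_pos'
    · intro j _
      rw [Matrix.smul_mulVec, dotProduct_smul, smul_eq_mul]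
      have := (hPcheckPD j).posSemidef.dotProduct_mulVec_nonneg x
      simp only [star_trivial] at this
      exact mul_nonneg (hω0 j) this
    · refine ⟨j0, Finset.mem_univ _, ?_⟩
      rw [Matrix.smul_mulVec, dotProduct_smul, smul_eq_mul]
      have := (hPcheckPD j0).dotProduct_mulVec_pos hx
      simp only [star_trivial] at this
      exact mul_pos hj0 this
  set A : Matrix (Fin n) (Fin n) ℝ := ∑ j, (Pcheck j)⁻¹ - ((m : ℝ) - 1) • PΓ⁻¹ with hA
  -- quadratic-form decomposition of A
  have hAx : ∀ x : Fin n → ℝ,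
      x ⬝ᵥ A *ᵥ x = (∑ j, x ⬝ᵥ (Pcheck j)⁻¹ *ᵥ x) - ((m:ℝ) - 1) * (x ⬝ᵥ PΓ⁻¹ *ᵥ x) := by
    intro x
    rw [hA, Matrix.sub_mulVec, dotProduct_sub, sum_mulVec', dot_sum',
      Matrix.smul_mulVec, dotProduct_smul, smul_eq_mul]
  -- the core ICI lower bound
  have hA_lb : ∀ x : Fin n → ℝ, (1/γbar) * (x ⬝ᵥ x) ≤ x ⬝ᵥ A *ᵥ x := by
    intro x
    set y : Fin n → ℝ := PΓ⁻¹ *ᵥ x with hy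
    have hyPΓ : y ⬝ᵥ PΓ *ᵥ y = x ⬝ᵥ y := by
      rw [hy, mulVec_inv_cancel' hPΓPD x, dotProduct_comm]
    have hsum_y : ∑ j, ω j * (y ⬝ᵥ (Pcheck j) *ᵥ y) = y ⬝ᵥ PΓ *ᵥ y := by
      rw [hPΓ, sum_mulVec', dot_sum']
      refine Finset.sum_congr rfl fun j _ => ?_
      rw [Matrix.smul_mulVec, dotProduct_smul, smul_eq_mul]
    have hPΓterm : ((m:ℝ) - 1) * (x ⬝ᵥ PΓ⁻¹ *ᵥ x)
        = ∑ j, ((m:ℝ) - 1) * ω j * (2 * (x ⬝ᵥ y) - y ⬝ᵥ (Pcheck j) *ᵥ y) := by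
      have hdist : ∑ j, ((m:ℝ) - 1) * ω j * (2 * (x ⬝ᵥ y) - y ⬝ᵥ (Pcheck j) *ᵥ y)
          = ((m:ℝ) - 1) * (2 * (x ⬝ᵥ y)) * (∑ j, ω j)
            - ((m:ℝ) - 1) * (∑ j, ω j * (y ⬝ᵥ (Pcheck j) *ᵥ y)) := by
        rw [Finset.mul_sum, Finset.mul_sum, ← Finset.sum_sub_distrib]
        exact Finset.sum_congr rfl fun j _ => by ring
      rw [hdist, hωsum, hsum_y, hyPΓ]
      have : x ⬝ᵥ PΓ⁻¹ *ᵥ x = x ⬝ᵥ y := rfl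
      rw [this]; ring
    have hcj : ∀ j, 0 ≤ ((m:ℝ) - 1) * ω j ∧ ((m:ℝ) - 1) * ω j ≤ 1 := by
      intro j
      constructor
      · exact mul_nonneg hm1.le (hω0 j)
      · have := hω1 j
        rw [le_div_iff₀ hm1] at this
        linarith [this]
    have step1 : ∑ j, (1 - ((m:ℝ) - 1) * ω j) * (x ⬝ᵥ (Pcheck j)⁻¹ *ᵥ x) ≤ x ⬝ᵥ A *ᵥ x := by
      rw [hAx x, hPΓterm, ← Finset.sum_sub_distrib]
      refine Finset.sum_le_sum fun j _ => ?_
      have hk := key_var (hPcheckPD j) x y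
      have := mul_le_mul_of_nonneg_left hk (hcj j).1
      nlinarith [this]
    have step2 : (1/γbar) * (x ⬝ᵥ x)
        ≤ ∑ j, (1 - ((m:ℝ) - 1) * ω j) * (x ⬝ᵥ (Pcheck j)⁻¹ *ᵥ x) := by
      have hterm : ∀ j ∈ Finset.univ,
          (1 - ((m:ℝ) - 1) * ω j) * ((1/γbar) * (x ⬝ᵥ x))
            ≤ (1 - ((m:ℝ) - 1) * ω j) * (x ⬝ᵥ (Pcheck j)⁻¹ *ᵥ x) := fun j _ =>
        mul_le_mul_of_nonneg_left (hLB j x) (by linarith [(hcj j).2])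
      have hcoef : ∑ j, (1 - ((m:ℝ) - 1) * ω j) = 1 := by
        rw [Finset.sum_sub_distrib, ← Finset.mul_sum, hωsum]
        simp [Finset.card_univ]
      calc (1/γbar) * (x ⬝ᵥ x)
          = (∑ j, (1 - ((m:ℝ) - 1) * ω j)) * ((1/γbar) * (x ⬝ᵥ x)) := by rw [hcoef, one_mul]
        _ = ∑ j, (1 - ((m:ℝ) - 1) * ω j) * ((1/γbar) * (x ⬝ᵥ x)) := by rw [Finset.sum_mul]
        _ ≤ _ := Finset.sum_le_sum hterm
    linarith [step1, step2]
  -- A is Hermitian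
  have hAH : A.IsHermitian := by
    rw [hA]
    exact (isHerm_sum' fun j => ((hPcheckInv j) ▸ (hInfo j).isHermitian)).sub
      (isHerm_smul' hPΓPD.inv.isHermitian _)
  -- A is positive definite
  have hAPD : A.PosDef := by
    refine Matrix.PosDef.of_dotProduct_mulVec_pos hAH fun x hx => ?_
    rw [star_trivial]
    have hxx : 0 < x ⬝ᵥ x := by
      have := Matrix.dotProduct_star_self_pos_iff.mpr hx
      simpa using this
    calc (0:ℝ) < (1/γbar) * (x ⬝ᵥ x) := by positivity
      _ ≤ x ⬝ᵥ A *ᵥ x := hA_lb x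
  refine ⟨hAPD, hAPD.inv, ?_⟩
  -- the Loewner bound on A⁻¹
  unfold Matrix.Loewner
  refine Matrix.PosSemidef.of_dotProduct_mulVec_nonneg ((isHerm_smul' Matrix.isHermitian_one _).sub hAPD.inv.isHermitian) fun x => ?_
  rw [star_trivial, Matrix.sub_mulVec, dotProduct_sub, Matrix.smul_mulVec,
    Matrix.one_mulVec, dotProduct_smul, smul_eq_mul]
  set z : Fin n → ℝ := A⁻¹ *ᵥ x with hz
  have hq : x ⬝ᵥ A⁻¹ *ᵥ x = 2 * (x ⬝ᵥ z) - z ⬝ᵥ A *ᵥ z := inv_quad_eq hAPD x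
  have hzA : (1/γbar) * (z ⬝ᵥ z) ≤ z ⬝ᵥ A *ᵥ z := hA_lb z
  have hsq : (0:ℝ) ≤ z ⬝ᵥ z - 2 * γbar * (x ⬝ᵥ z) + γbar * γbar * (x ⬝ᵥ x) := by
    have h0 : (0:ℝ) ≤ (z - γbar • x) ⬝ᵥ (z - γbar • x) := by
      unfold dotProduct
      exact Finset.sum_nonneg fun i _ => mul_self_nonneg _
    have hexp : (z - γbar • x) ⬝ᵥ (z - γbar • x)
        = z ⬝ᵥ z - 2 * γbar * (x ⬝ᵥ z) + γbar * γbar * (x ⬝ᵥ x) := by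
      simp only [sub_dotProduct, dotProduct_sub, smul_dotProduct, dotProduct_smul,
        smul_eq_mul, dotProduct_comm z x]
      ring
    linarith [hexp ▸ h0]
  have h2 : (0:ℝ) ≤ (1/γbar) * (z ⬝ᵥ z) - 2 * (x ⬝ᵥ z) + γbar * (x ⬝ᵥ x) := by
    have he : (1/γbar) * (z ⬝ᵥ z - 2 * γbar * (x ⬝ᵥ z) + γbar * γbar * (x ⬝ᵥ x))
        = (1/γbar) * (z ⬝ᵥ z) - 2 * (x ⬝ᵥ z) + γbar * (x ⬝ᵥ x) := by
      field_simp
    have := mul_nonneg (by positivity : (0:ℝ) ≤ 1/γbar) hsq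
    linarith [he ▸ this]
  linarith [hq, hzA, h2]
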